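/- For every ε < 1/17 and R < 1 − H(3ε) (H the binary entropy), there exists a linear unbounded code over 𝔽₂ with rate R resilient to BSC(ε) noise: there exist k₀, c > 0 and a decoder D such that for all messages x, all i ≥ k₀ and j ≥ i/R, the probability (over i.i.d. Bernoulli(ε) bit flips on the first j codeword bits) that D fails to recover x[:i] from the corrupted prefix is at most exp(−cj). -/

import Mathlib

/-- The binary entropy function `H(p) = −p log₂ p − (1−p) log₂ (1−p)`. -/
noncomputable def binEnt (p : ℝ) : ℝ :=
  -(p * Real.logb 2 p) - (1 - p) * Real.logb 2 (1 - p)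

open Finset

namespace UCode

abbrev F2 := ZMod 2

noncomputable instance : DecidableEq (ℕ → F2) := Classical.decEq _

lemma f2_cases : ∀ a : F2, a = 0 ∨ a = 1 := by decide

lemma f2_ne_zero : ∀ a : F2, a ≠ 0 → a = 1 := by decide

lemma f2_univ : (univ : Finset F2) = {0, 1} := by decide

lemma f2_sum_univ (g : F2 → ℝ) : ∑ b, g b = g 0 + g 1 := by
  rw [f2_univ, Finset.sum_pair (by decide)]

lemma sum_fn_prod {J : ℕ} {κ : Type*} [Fintype κ] (f : Fin J → κ → ℝ) :
    ∑ w : Fin J → κ, ∏ n, f n (w n) = ∏ n, ∑ k, f n k := by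
  induction J with
  | zero =>
      simp
  | succ J ih =>
      rw [← Equiv.sum_comp (Fin.consEquiv (fun _ : Fin (J+1) => κ))
        (fun w => ∏ n, f n (w n)), Fintype.sum_prod_type]
      simp only [Fin.consEquiv_apply]
      have : ∀ (a : κ) (v : Fin J → κ),
          ∏ n, f n ((Fin.cons a v : Fin (J+1) → κ) n) = f 0 a * ∏ n : Fin J, f n.succ (v n) := by
        intro a v
        rw [Fin.prod_univ_succ]
        simp
      simp only [this]
      rw [Fin.prod_univ_succ]
      simp only [← Finset.sum_mul, ← Finset.mul_sum]
      rw [ih (fun n k => f n.succ k)]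

lemma prod_ite_card {β : Type*} [Fintype β] (p : β → Prop) [DecidablePred p] (r : ℝ) :
    ∏ n, (if p n then r else 1) = r ^ (univ.filter p).card := by
  rw [← Finset.prod_filter, Finset.prod_const]

lemma card_filter_fin (j : ℕ) (p : ℕ → Prop) [DecidablePred p] :
    (univ.filter (fun n : Fin j => p (n : ℕ))).card = ((range j).filter p).card := by
  apply Finset.card_bij (fun (n : Fin j) _ => (n : ℕ))
  · intro a ha
    simp only [mem_filter, mem_univ, true_and] at ha
    simp [ha, a.2]
  · intro a _ b _ h
    exact Fin.val_injective h
  · intro b hb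
    simp only [mem_filter, mem_range] at hb
    exact ⟨⟨b, hb.1⟩, by simp [hb.2], rfl⟩

lemma card_f2_fun (W : ℕ) : Fintype.card (Fin W → F2) = 2 ^ W := by
  simp [Fintype.card_fun]

lemma sum_balanced {W : ℕ} (bit : (Fin W → F2) → F2) (d : Fin W → F2)
    (hd : ∀ v, bit (v + d) = bit v + 1) (g : F2 → ℝ) :
    ∑ v : Fin W → F2, g (bit v) = 2 ^ W * ((g 0 + g 1) / 2) := by
  have h2 : (∑ v : Fin W → F2, g (bit v)) + (∑ v : Fin W → F2, g (bit v))
      = ∑ _v : Fin W → F2, (g 0 + g 1) := by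
    nth_rewrite 2 [← Equiv.sum_comp (Equiv.addRight d) (fun v => g (bit v))]
    rw [← Finset.sum_add_distrib]
    refine Finset.sum_congr rfl fun v _ => ?_
    have : bit ((Equiv.addRight d) v) = bit v + 1 := hd v
    rw [this]
    rcases f2_cases (bit v) with h | h <;> rw [h] <;> norm_num
    exact add_comm _ _
  rw [Finset.sum_const, card_univ, card_f2_fun, nsmul_eq_mul] at h2
  have : (2:ℝ) * ∑ v : Fin W → F2, g (bit v) = (2:ℝ)^W * (g 0 + g 1) := by
    push_cast at h2 ⊢
    linarith
  linarith


/-! ### Code structure -/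

/-- scope of output row `n`: it may use message bits `t < mrow R' n`. -/
noncomputable def mrow (R' : ℝ) (n : ℕ) : ℕ := ⌈R' * ((n : ℝ) + 1)⌉₊

/-- all rows `n < j` have scope at most `Mcap R' j`. -/
noncomputable def Mcap (R' : ℝ) (j : ℕ) : ℕ := ⌈R' * (j : ℝ)⌉₊

lemma mrow_mono (hR' : 0 ≤ R') : Monotone (mrow R') := fun a b hab =>
  Nat.ceil_le_ceil (by
    have : (a:ℝ) ≤ b := by exact_mod_cast hab
    nlinarith)

lemma mrow_le_Mcap (hR' : 0 ≤ R') {n j : ℕ} (h : n < j) : mrow R' n ≤ Mcap R' j := by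
  apply Nat.ceil_le_ceil
  have : (n:ℝ) + 1 ≤ j := by exact_mod_cast h
  nlinarith

lemma Mcap_le (hR' : 0 ≤ R') (j : ℕ) : (Mcap R' j : ℝ) ≤ R' * j + 1 :=
  le_of_lt (Nat.ceil_lt_add_one (by positivity))

/-- The linear encoder given generator rows `G`. -/
noncomputable def enc (R' : ℝ) (G : ∀ n, Fin (mrow R' n) → F2) (x : ℕ → F2) (n : ℕ) : F2 :=
  ∑ t : Fin (mrow R' n), G n t * x (t : ℕ)

lemma enc_add (R' : ℝ) (G : ∀ n, Fin (mrow R' n) → F2) (x y : ℕ → F2) (n : ℕ) :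
    enc R' G (x + y) n = enc R' G x n + enc R' G y n := by
  unfold enc
  rw [← Finset.sum_add_distrib]
  exact Finset.sum_congr rfl fun t _ => by simp [mul_add]

lemma enc_congr (R' : ℝ) (G : ∀ n, Fin (mrow R' n) → F2) {x y : ℕ → F2} (n : ℕ)
    (h : ∀ t < mrow R' n, x t = y t) : enc R' G x n = enc R' G y n :=
  Finset.sum_congr rfl fun t _ => by rw [h t t.2]

lemma enc_zero (R' : ℝ) (G : ∀ n, Fin (mrow R' n) → F2) {z : ℕ → F2} (n : ℕ)
    (h : ∀ t < mrow R' n, z t = 0) : enc R' G z n = 0 := by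
  unfold enc
  refine Finset.sum_eq_zero fun t _ => ?_
  rw [h t t.2, mul_zero]

/-- first row whose scope includes message bit `t0`. -/
noncomputable def nzero (R' : ℝ) (t0 : ℕ) : ℕ := sInf {n | t0 < mrow R' n}

lemma nzero_set_nonempty (hR' : 0 < R') (t0 : ℕ) : {n | t0 < mrow R' n}.Nonempty := by
  refine ⟨⌊(t0:ℝ) / R'⌋₊, ?_⟩
  simp only [Set.mem_setOf_eq, mrow]
  rw [Nat.lt_ceil]
  have h1 : (t0:ℝ) / R' < (⌊(t0:ℝ) / R'⌋₊ : ℝ) + 1 := Nat.lt_floor_add_one _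
  have h2 : (t0:ℝ) = R' * ((t0:ℝ)/R') := by field_simp
  nlinarith

lemma nzero_mem (hR' : 0 < R') (t0 : ℕ) : t0 < mrow R' (nzero R' t0) :=
  Nat.sInf_mem (nzero_set_nonempty hR' t0)

lemma nzero_scope (hR' : 0 < R') {t0 n : ℕ} (h : nzero R' t0 ≤ n) : t0 < mrow R' n :=
  lt_of_lt_of_le (nzero_mem hR' t0) (mrow_mono (le_of_lt hR') h)

lemma nzero_le (hR' : 0 < R') (t0 : ℕ) : (nzero R' t0 : ℝ) ≤ (t0:ℝ) / R' := by
  have h : nzero R' t0 ≤ ⌊(t0:ℝ) / R'⌋₊ := Nat.sInf_le (by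
    simp only [Set.mem_setOf_eq, mrow]
    rw [Nat.lt_ceil]
    have h1 : (t0:ℝ) / R' < (⌊(t0:ℝ) / R'⌋₊ : ℝ) + 1 := Nat.lt_floor_add_one _
    have h2 : (t0:ℝ) = R' * ((t0:ℝ)/R') := by field_simp
    nlinarith)
  calc (nzero R' t0 : ℝ) ≤ (⌊(t0:ℝ) / R'⌋₊ : ℝ) := by exact_mod_cast h
    _ ≤ (t0:ℝ)/R' := Nat.floor_le (by positivity)

lemma nzero_lower (hR' : 0 < R') (t0 : ℕ) : R' * (nzero R' t0 : ℝ) ≤ t0 := by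
  rcases Nat.eq_zero_or_pos (nzero R' t0) with h | h
  · rw [h]; simp
  · have hk : nzero R' t0 - 1 < nzero R' t0 := Nat.sub_lt h one_pos
    have hmem : mrow R' (nzero R' t0 - 1) ≤ t0 := by
      have := Nat.notMem_of_lt_sInf (s := {n | t0 < mrow R' n}) hk
      simpa [Set.mem_setOf_eq, not_lt] using this
    have h2 : R' * (((nzero R' t0 - 1 : ℕ):ℝ) + 1) ≤ (mrow R' (nzero R' t0 - 1) : ℝ) := by
      unfold mrow; exact Nat.le_ceil _
    have h3 : ((nzero R' t0 - 1 : ℕ):ℝ) + 1 = (nzero R' t0 : ℝ) := by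
      have : (1:ℕ) ≤ nzero R' t0 := h
      push_cast [Nat.cast_sub this]
      ring
    have h4 : (mrow R' (nzero R' t0 - 1) : ℝ) ≤ t0 := by exact_mod_cast hmem
    rw [h3] at h2
    linarith

lemma nzero_lt (hR' : 0 < R') {t0 j : ℕ} (h : (t0:ℝ) < R' * j) : nzero R' t0 < j := by
  by_contra hc
  push_neg at hc
  have h1 := nzero_lower hR' t0
  have h2 : (j:ℝ) ≤ (nzero R' t0 : ℝ) := by exact_mod_cast hc
  nlinarith

/-- extension by zero. -/
def extendF (M : ℕ) (x' : Fin M → F2) : ℕ → F2 := fun s => if h : s < M then x' ⟨s, h⟩ else 0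

/-- nearest-codeword decoder over candidates supported on `Mcap R' j`. -/
noncomputable def dec (R' : ℝ) (G : ∀ n, Fin (mrow R' n) → F2) (j : ℕ) (y : Fin j → F2) :
    ℕ → F2 :=
  Classical.choose (Finset.exists_min_image
    ((univ : Finset (Fin (Mcap R' j) → F2)).image (extendF (Mcap R' j)))
    (fun g => (univ.filter (fun n : Fin j => enc R' G g n ≠ y n)).card)
    ⟨extendF _ (fun _ => 0), Finset.mem_image_of_mem _ (Finset.mem_univ _)⟩)

lemma dec_spec (R' : ℝ) (G : ∀ n, Fin (mrow R' n) → F2) (j : ℕ) (y : Fin j → F2) :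
    (∃ x', dec R' G j y = extendF (Mcap R' j) x') ∧
    ∀ x' : Fin (Mcap R' j) → F2,
      (univ.filter (fun n : Fin j => enc R' G (dec R' G j y) n ≠ y n)).card ≤
      (univ.filter (fun n : Fin j => enc R' G (extendF (Mcap R' j) x') n ≠ y n)).card := by
  have h := Classical.choose_spec (Finset.exists_min_image
    ((univ : Finset (Fin (Mcap R' j) → F2)).image (extendF (Mcap R' j)))
    (fun g => (univ.filter (fun n : Fin j => enc R' G g n ≠ y n)).card)
    ⟨extendF _ (fun _ => 0), Finset.mem_image_of_mem _ (Finset.mem_univ _)⟩)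
  obtain ⟨hmem, hmin⟩ := h
  obtain ⟨x', _, hx'⟩ := Finset.mem_image.mp hmem
  exact ⟨⟨x', hx'.symm⟩, fun x'' => hmin _ (Finset.mem_image_of_mem _ (Finset.mem_univ x''))⟩

/-- The distance property of the code at parameters `(j, t0, z)`. -/
def GoodAt (ε R' : ℝ) (G : ∀ n, Fin (mrow R' n) → F2) (j t0 : ℕ) (z : ℕ → F2) : Prop :=
  3*ε*((j:ℝ) - (nzero R' t0 : ℝ)) ≤
    (((range j).filter (fun n => nzero R' t0 ≤ n ∧ enc R' G z n = 1)).card : ℝ)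

/-- All required distance properties for `j₀ ≤ j ≤ J`. -/
def GoodUpTo (ε R R' : ℝ) (j₀ J : ℕ) (G : ∀ n, Fin (mrow R' n) → F2) : Prop :=
  ∀ j, j₀ ≤ j → j ≤ J → ∀ t0 : ℕ, ((t0:ℝ) + 1 ≤ R * j) → ∀ z : ℕ → F2,
    (∀ s, s < t0 → z s = 0) → z t0 = 1 → (∀ s, Mcap R' j ≤ s → z s = 0) →
    GoodAt ε R' G j t0 z



/-! ### Chernoff bound for the noise -/

lemma prod_ite_card' {β : Type*} (s : Finset β) (p : β → Prop) [DecidablePred p] (r : ℝ) :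
    ∏ n ∈ s, (if p n then r else 1) = r ^ (s.filter p).card := by
  rw [← Finset.prod_filter, Finset.prod_const]

lemma count_ge_card (j n0v : ℕ) :
    (univ.filter (fun t : Fin j => n0v ≤ (t:ℕ))).card = j - n0v := by
  rw [card_filter_fin j (fun n => n0v ≤ n)]
  have : (range j).filter (fun n => n0v ≤ n) = Ico n0v j := by
    ext n; simp [mem_Ico, mem_range, and_comm]
  rw [this, Nat.card_Ico]

lemma chernoff (ε : ℝ) (hε0 : 0 < ε) (hε1 : ε < 1) (j n0v : ℕ) (a : ℝ) (ha : 0 ≤ a) :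
    ∑ η : Fin j → F2, (∏ t : Fin j, if η t = 1 then ε else 1 - ε) *
      (if a ≤ ((univ.filter (fun t : Fin j => n0v ≤ (t:ℕ) ∧ η t = 1)).card : ℝ)
        then (1:ℝ) else 0)
    ≤ (2:ℝ) ^ (-a) * (1+ε) ^ (j - n0v) := by
  have hterm : ∀ η : Fin j → F2,
      (∏ t : Fin j, if η t = 1 then ε else 1 - ε) *
        (if a ≤ ((univ.filter (fun t : Fin j => n0v ≤ (t:ℕ) ∧ η t = 1)).card : ℝ)
          then (1:ℝ) else 0)
      ≤ (2:ℝ)^(-a : ℝ) * ∏ t : Fin j,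
          ((if η t = 1 then ε else 1 - ε) * (if n0v ≤ (t:ℕ) ∧ η t = 1 then 2 else 1)) := by
    intro η
    have hw : (0:ℝ) ≤ ∏ t : Fin j, (if η t = 1 then ε else 1 - ε) :=
      Finset.prod_nonneg fun t _ => by split <;> linarith
    rw [Finset.prod_mul_distrib, prod_ite_card]
    set W := ∏ t : Fin j, (if η t = 1 then ε else 1 - ε) with hWdef
    set cnt := (univ.filter (fun t : Fin j => n0v ≤ (t:ℕ) ∧ η t = 1)).card with hcnt
    split
    · rename_i hc
      rw [mul_one]
      have h1 : (1:ℝ) ≤ (2:ℝ)^(-a : ℝ) * 2^cnt := by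
        rw [← Real.rpow_natCast 2 cnt, ← Real.rpow_add two_pos]
        calc (1:ℝ) = (2:ℝ)^(0:ℝ) := (Real.rpow_zero 2).symm
          _ ≤ _ := Real.rpow_le_rpow_of_exponent_le one_le_two (by linarith)
      calc W = W * 1 := (mul_one W).symm
        _ ≤ W * ((2:ℝ)^(-a:ℝ) * 2^cnt) := mul_le_mul_of_nonneg_left h1 hw
        _ = (2:ℝ)^(-a:ℝ) * (W * 2^cnt) := by ring
    · rw [mul_zero]
      have h2 : (0:ℝ) ≤ (2:ℝ)^(-a:ℝ) := Real.rpow_nonneg (by norm_num) _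
      have h3 : (0:ℝ) ≤ (2:ℝ)^cnt := by positivity
      exact mul_nonneg h2 (mul_nonneg hw h3)
  calc ∑ η : Fin j → F2, (∏ t : Fin j, if η t = 1 then ε else 1 - ε) *
        (if a ≤ ((univ.filter (fun t : Fin j => n0v ≤ (t:ℕ) ∧ η t = 1)).card : ℝ)
          then (1:ℝ) else 0)
      ≤ ∑ η : Fin j → F2, (2:ℝ)^(-a:ℝ) * ∏ t : Fin j,
          ((if η t = 1 then ε else 1 - ε) * (if n0v ≤ (t:ℕ) ∧ η t = 1 then 2 else 1)) :=
        Finset.sum_le_sum fun η _ => hterm η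
    _ = (2:ℝ)^(-a:ℝ) * ∑ η : Fin j → F2, ∏ t : Fin j,
          ((if η t = 1 then ε else 1 - ε) * (if n0v ≤ (t:ℕ) ∧ η t = 1 then 2 else 1)) := by
        rw [← Finset.mul_sum]
    _ = (2:ℝ)^(-a:ℝ) * ∏ t : Fin j, ∑ b : F2,
          ((if b = 1 then ε else 1 - ε) * (if n0v ≤ (t:ℕ) ∧ b = 1 then 2 else 1)) := by
        rw [sum_fn_prod (fun t b => (if b = 1 then ε else 1 - ε) *
          (if n0v ≤ (t:ℕ) ∧ b = 1 then 2 else 1))]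
    _ = (2:ℝ)^(-a:ℝ) * ∏ t : Fin j, (if n0v ≤ (t:ℕ) then 1+ε else 1) := by
        congr 1
        refine Finset.prod_congr rfl fun t _ => ?_
        rw [f2_sum_univ]
        by_cases h : n0v ≤ (t:ℕ) <;> simp [h] <;> norm_num <;> ring
    _ = (2:ℝ)^(-a:ℝ) * (1+ε) ^ (j - n0v) := by
        rw [prod_ite_card, count_ge_card]

/-! ### Counting: existence of rows with the distance property -/

/-- The codeword bit produced at row `n` from a width-`W` row vector. -/
noncomputable def rowBit (R' : ℝ) (W : ℕ) (z : ℕ → F2) (n : ℕ) (row : Fin W → F2) : F2 :=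
  ∑ t ∈ range (mrow R' n), (if h : t < W then row ⟨t, h⟩ else 0) * z t

lemma rowBit_flip (R' : ℝ) (W : ℕ) (z : ℕ → F2) (n : ℕ) (t0 : ℕ)
    (ht0m : t0 < mrow R' n) (ht0W : t0 < W) (hz : z t0 = 1)
    (d : Fin W → F2) (hd : ∀ s : Fin W, d s = if (s:ℕ) = t0 then 1 else 0)
    (row : Fin W → F2) :
    rowBit R' W z n (row + d) = rowBit R' W z n row + 1 := by
  unfold rowBit
  have h1 : ∀ t ∈ range (mrow R' n),
      (if h : t < W then (row + d) ⟨t, h⟩ else 0) * z t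
      = (if h : t < W then row ⟨t, h⟩ else 0) * z t
        + (if t = t0 then (1:F2) else 0) * z t := by
    intro t _
    by_cases h : t < W
    · simp only [dif_pos h, Pi.add_apply, hd ⟨t, h⟩]
      rw [add_mul]
    · simp only [dif_neg h]
      have : ¬ t = t0 := fun he => h (he ▸ ht0W)
      simp [this]
  rw [Finset.sum_congr rfl h1, Finset.sum_add_distrib]
  congr 1
  rw [Finset.sum_eq_single t0]
  · simp [hz]
  · intro t _ ht; simp [ht]
  · intro h; exact absurd (Finset.mem_range.mpr ht0m) h

lemma gv_count (R' : ℝ) (hR'0 : 0 < R') {r : ℝ} (hr0 : 0 < r) (hr1 : r ≤ 1)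
    (J W j : ℕ) (hjJ : j ≤ J) (hW : ∀ n, n < J → mrow R' n ≤ W)
    (z : ℕ → F2) (t0 : ℕ) (hz : z t0 = 1) (δthr : ℝ) :
    ∑ w : Fin J → (Fin W → F2),
      (if δthr ≤ ((((range j).filter (fun n => nzero R' t0 ≤ n ∧
            rowBit R' W z n (if h : n < J then w ⟨n, h⟩ else (fun _ => 0)) = 1)).card : ℕ) : ℝ)
        then (0:ℝ) else 1)
    ≤ r^(-δthr) * (((2:ℝ)^W)^J * ((1+r)/2) ^ (j - nzero R' t0)) := by
  set nz := nzero R' t0 with hnz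
  have hterm : ∀ w : Fin J → (Fin W → F2),
      (if δthr ≤ ((((range j).filter (fun n => nz ≤ n ∧
            rowBit R' W z n (if h : n < J then w ⟨n, h⟩ else (fun _ => 0)) = 1)).card : ℕ) : ℝ)
        then (0:ℝ) else 1)
      ≤ r^(-δthr) * ∏ n : Fin J,
          (if nz ≤ (n:ℕ) ∧ (n:ℕ) < j ∧ rowBit R' W z (n:ℕ) (w n) = 1 then r else 1) := by
    intro w
    have hprod : ∏ n : Fin J,
        (if nz ≤ (n:ℕ) ∧ (n:ℕ) < j ∧ rowBit R' W z (n:ℕ) (w n) = 1 then r else 1)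
        = r ^ ((range j).filter (fun n => nz ≤ n ∧
            rowBit R' W z n (if h : n < J then w ⟨n, h⟩ else (fun _ => 0)) = 1)).card := by
      have e1 : ∏ n : Fin J,
          (if nz ≤ (n:ℕ) ∧ (n:ℕ) < j ∧ rowBit R' W z (n:ℕ) (w n) = 1 then r else 1)
          = ∏ n : Fin J, (fun k : ℕ => if k < j then (if nz ≤ k ∧
              rowBit R' W z k (if h : k < J then w ⟨k, h⟩ else (fun _ => 0)) = 1
              then r else 1) else 1) (n:ℕ) := by
        refine Finset.prod_congr rfl fun n _ => ?_
        simp only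
        have hn : (if h : (n:ℕ) < J then w ⟨(n:ℕ), h⟩ else (fun _ => 0)) = w n := by
          rw [dif_pos n.2]
        rw [hn]
        by_cases h1 : (n:ℕ) < j
        · rw [if_pos h1]
          by_cases h2 : nz ≤ (n:ℕ) ∧ rowBit R' W z (n:ℕ) (w n) = 1
          · rw [if_pos ⟨h2.1, h1, h2.2⟩, if_pos h2]
          · rw [if_neg (fun hc => h2 ⟨hc.1, hc.2.2⟩), if_neg h2]
        · rw [if_neg (fun hc => h1 hc.2.1), if_neg h1]
      rw [e1]
      rw [Fin.prod_univ_eq_prod_range (fun k : ℕ => if k < j then (if nz ≤ k ∧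
            rowBit R' W z k (if h : k < J then w ⟨k, h⟩ else (fun _ => 0)) = 1
            then r else 1) else 1) J]
      rw [← Finset.prod_filter]
      have e2 : (range J).filter (fun k => k < j) = range j := by
        ext k; simp only [mem_filter, mem_range]
        constructor
        · rintro ⟨_, h2⟩; exact h2
        · intro h; exact ⟨h.trans_le hjJ, h⟩
      rw [e2, prod_ite_card']
    rw [hprod]
    split
    · rename_i hc
      exact mul_nonneg (Real.rpow_nonneg hr0.le _) (pow_nonneg hr0.le _)
    · rename_i hc
      push_neg at hc
      set cnt := ((range j).filter (fun n => nz ≤ n ∧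
        rowBit R' W z n (if h : n < J then w ⟨n, h⟩ else (fun _ => 0)) = 1)).card
      have h1 : r ^ δthr ≤ r ^ ((cnt:ℕ):ℝ) :=
        Real.rpow_le_rpow_of_exponent_ge hr0 hr1 hc.le
      have h2 : (1:ℝ) = r^(-δthr) * r^(δthr) := by
        rw [← Real.rpow_add hr0]; simp
      calc (1:ℝ) = r^(-δthr) * r^(δthr) := h2
        _ ≤ r^(-δthr) * r^((cnt:ℕ):ℝ) :=
            mul_le_mul_of_nonneg_left h1 (Real.rpow_nonneg hr0.le _)
        _ = r^(-δthr) * r^cnt := by rw [Real.rpow_natCast]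
  calc ∑ w : Fin J → (Fin W → F2),
      (if δthr ≤ ((((range j).filter (fun n => nz ≤ n ∧
            rowBit R' W z n (if h : n < J then w ⟨n, h⟩ else (fun _ => 0)) = 1)).card : ℕ) : ℝ)
        then (0:ℝ) else 1)
      ≤ ∑ w : Fin J → (Fin W → F2), r^(-δthr) * ∏ n : Fin J,
          (if nz ≤ (n:ℕ) ∧ (n:ℕ) < j ∧ rowBit R' W z (n:ℕ) (w n) = 1 then r else 1) :=
        Finset.sum_le_sum fun w _ => hterm w
    _ = r^(-δthr) * ∑ w : Fin J → (Fin W → F2), ∏ n : Fin J,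
          (if nz ≤ (n:ℕ) ∧ (n:ℕ) < j ∧ rowBit R' W z (n:ℕ) (w n) = 1 then r else 1) := by
        rw [← Finset.mul_sum]
    _ = r^(-δthr) * ∏ n : Fin J, ∑ row : Fin W → F2,
          (if nz ≤ (n:ℕ) ∧ (n:ℕ) < j ∧ rowBit R' W z (n:ℕ) row = 1 then r else 1) := by
        rw [sum_fn_prod (fun (n : Fin J) (row : Fin W → F2) =>
          (if nz ≤ (n:ℕ) ∧ (n:ℕ) < j ∧ rowBit R' W z (n:ℕ) row = 1 then r else 1))]
    _ = r^(-δthr) * ∏ n : Fin J,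
          (if nz ≤ (n:ℕ) ∧ (n:ℕ) < j then (2:ℝ)^W * ((1+r)/2) else (2:ℝ)^W) := by
        congr 1
        refine Finset.prod_congr rfl fun n _ => ?_
        by_cases hn : nz ≤ (n:ℕ) ∧ (n:ℕ) < j
        · rw [if_pos hn]
          have ht0m : t0 < mrow R' (n:ℕ) := nzero_scope hR'0 hn.1
          have ht0W : t0 < W := lt_of_lt_of_le ht0m (hW (n:ℕ) n.2)
          have hbal := sum_balanced (rowBit R' W z (n:ℕ))
            (fun s : Fin W => if (s:ℕ) = t0 then 1 else 0)
            (rowBit_flip R' W z (n:ℕ) t0 ht0m ht0W hz _ (fun s => rfl))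
            (fun b => if b = 1 then r else 1)
          have he : ∀ row : Fin W → F2,
              (if nz ≤ (n:ℕ) ∧ (n:ℕ) < j ∧ rowBit R' W z (n:ℕ) row = 1 then r else 1)
              = (if rowBit R' W z (n:ℕ) row = 1 then r else 1) := by
            intro row
            by_cases hb : rowBit R' W z (n:ℕ) row = 1
            · rw [if_pos ⟨hn.1, hn.2, hb⟩, if_pos hb]
            · rw [if_neg (fun hc => hb hc.2.2), if_neg hb]
          rw [Finset.sum_congr rfl (fun row _ => he row), hbal]
          have h0 : (if (0:F2) = 1 then r else 1) = 1 := if_neg (by decide)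
          have h1 : (if (1:F2) = 1 then r else 1) = r := if_pos rfl
          rw [h0, h1]
        · rw [if_neg hn]
          have he : ∀ row : Fin W → F2,
              (if nz ≤ (n:ℕ) ∧ (n:ℕ) < j ∧ rowBit R' W z (n:ℕ) row = 1 then r else 1) = 1 :=
            fun row => if_neg (fun hc => hn ⟨hc.1, hc.2.1⟩)
          rw [Finset.sum_congr rfl (fun row _ => he row), Finset.sum_const, card_univ,
            card_f2_fun, nsmul_eq_mul, mul_one]
          push_cast
          ring
    _ = r^(-δthr) * (((2:ℝ)^W)^J * ((1+r)/2) ^ (j - nz)) := by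
        congr 1
        have he : ∀ n : Fin J,
            (if nz ≤ (n:ℕ) ∧ (n:ℕ) < j then (2:ℝ)^W * ((1+r)/2) else (2:ℝ)^W)
            = (2:ℝ)^W * (if nz ≤ (n:ℕ) ∧ (n:ℕ) < j then ((1+r)/2) else 1) := by
          intro n
          by_cases hn : nz ≤ (n:ℕ) ∧ (n:ℕ) < j
          · rw [if_pos hn, if_pos hn]
          · rw [if_neg hn, if_neg hn, mul_one]
        rw [Finset.prod_congr rfl (fun n _ => he n), Finset.prod_mul_distrib,
          Finset.prod_const, prod_ite_card, card_univ, Fintype.card_fin]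
        congr 1
        rw [card_filter_fin J (fun k => nz ≤ k ∧ k < j)]
        have e3 : (range J).filter (fun k => nz ≤ k ∧ k < j) = Ico nz j := by
          ext k
          simp only [mem_filter, mem_range, mem_Ico]
          constructor
          · rintro ⟨_, h2⟩; exact h2
          · intro h; exact ⟨h.2.trans_le hjJ, h⟩
        rw [e3, Nat.card_Ico]

/-! ### Analytic helpers -/

lemma sq_div_four_le_exp {x : ℝ} (hx : 0 ≤ x) : x^2/4 ≤ Real.exp x := by
  have h := Real.add_one_le_exp (x/2)
  have h2 : Real.exp x = Real.exp (x/2) * Real.exp (x/2) := by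
    rw [← Real.exp_add]; ring_nf
  have h3 : x/2 ≤ Real.exp (x/2) := by linarith
  have h4 : (x/2) * (x/2) ≤ Real.exp (x/2) * Real.exp (x/2) :=
    mul_le_mul h3 h3 (by linarith) (Real.exp_pos _).le
  nlinarith

lemma nat_le_exp {κ K : ℝ} (hκ : 0 < κ) (hK : 0 ≤ K) :
    ∃ N : ℕ, ∀ j : ℕ, N ≤ j → (j:ℝ) * K ≤ Real.exp (κ * j) := by
  refine ⟨⌈4*K/κ^2⌉₊, fun j hj => ?_⟩
  have h1 : 4*K/κ^2 ≤ (j:ℝ) := by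
    calc 4*K/κ^2 ≤ (⌈4*K/κ^2⌉₊ : ℝ) := Nat.le_ceil _
      _ ≤ (j:ℝ) := by exact_mod_cast hj
  have h2 : (κ*j)^2/4 ≤ Real.exp (κ*j) := sq_div_four_le_exp (by positivity)
  have h3 : (j:ℝ)*K ≤ (κ*j)^2/4 := by
    have hj0 : (0:ℝ) ≤ j := Nat.cast_nonneg j
    have h1' : 4*K ≤ (j:ℝ)*κ^2 := by
      rw [div_le_iff₀ (by positivity)] at h1; linarith
    have h2' := mul_le_mul_of_nonneg_left h1' hj0
    nlinarith
  linarith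

lemma pow_eq_exp_log {σ : ℝ} (hσ : 0 < σ) (j : ℕ) : σ ^ j = Real.exp ((j:ℝ) * Real.log σ) := by
  rw [← Real.log_pow, Real.exp_log (by positivity)]

lemma geom_tail {σ : ℝ} (h0 : 0 ≤ σ) (h1 : σ < 1) (j₀ J : ℕ) :
    ∑ j ∈ Icc j₀ J, σ^j ≤ σ^j₀ / (1-σ) := by
  rcases le_or_gt j₀ (J+1) with hle | hlt
  · rw [← Finset.Ico_add_one_right_eq_Icc, Finset.sum_Ico_eq_sum_range]
    have : ∀ k, σ^(j₀ + k) = σ^j₀ * σ^k := fun k => pow_add σ j₀ k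
    rw [Finset.sum_congr rfl (fun k _ => this k), ← Finset.mul_sum]
    have hg : ∑ k ∈ range (J + 1 - j₀), σ^k ≤ 1/(1-σ) := by
      rw [geom_sum_eq h1.ne]
      have e : (σ^(J+1-j₀) - 1)/(σ-1) = (1 - σ^(J+1-j₀))/(1-σ) := by
        rw [← neg_div_neg_eq]; ring_nf
      rw [e, div_le_div_iff₀ (by linarith) (by linarith)]
      have : (0:ℝ) ≤ σ^(J+1-j₀) := by positivity
      nlinarith
    calc σ^j₀ * ∑ k ∈ range (J + 1 - j₀), σ^k ≤ σ^j₀ * (1/(1-σ)) :=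
          mul_le_mul_of_nonneg_left hg (by positivity)
      _ = σ^j₀/(1-σ) := by ring
  · have : Icc j₀ J = ∅ := by
      rw [Finset.Icc_eq_empty_iff]; omega
    rw [this, Finset.sum_empty]
    have h2 : (0:ℝ) < 1 - σ := by linarith
    positivity

/-- binary entropy at `δ ∈ (0,1)` is positive. -/
lemma binEnt_pos {δ : ℝ} (h0 : 0 < δ) (h1 : δ < 1) : 0 < binEnt δ := by
  unfold binEnt
  have l1 : Real.logb 2 δ < 0 := Real.logb_neg one_lt_two h0 h1
  have l2 : Real.logb 2 (1-δ) < 0 := Real.logb_neg one_lt_two (by linarith) (by linarith)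
  nlinarith

/-- the entropy-MGF identity used in the union bound. -/
lemma entropy_id {δ : ℝ} (h0 : 0 < δ) (h1 : δ < 1) :
    (δ/(1-δ))^(-δ : ℝ) * ((1 + δ/(1-δ))/2) = (2:ℝ)^(binEnt δ - 1) := by
  have hd : (0:ℝ) < 1 - δ := by linarith
  have l1 : (2:ℝ)^(Real.logb 2 δ * (-δ)) = δ^(-δ:ℝ) := by
    rw [Real.rpow_mul (by norm_num), Real.rpow_logb (by norm_num) (by norm_num) h0]
  have l2 : (2:ℝ)^(Real.logb 2 (1-δ) * (δ-1)) = (1-δ)^((δ:ℝ)-1) := by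
    rw [Real.rpow_mul (by norm_num), Real.rpow_logb (by norm_num) (by norm_num) hd]
  have hsplit : binEnt δ - 1 = Real.logb 2 δ * (-δ) + (Real.logb 2 (1-δ) * (δ-1) + (-1)) := by
    unfold binEnt; ring
  rw [hsplit, Real.rpow_add (by norm_num), Real.rpow_add (by norm_num), l1, l2]
  have e1 : (1 + δ/(1-δ)) = (1-δ)⁻¹ := by field_simp; ring
  have e2 : (δ/(1-δ))^(-δ:ℝ) = δ^(-δ:ℝ) * (1-δ)^(δ:ℝ) := by
    rw [Real.rpow_neg (by positivity : (0:ℝ) ≤ δ/(1-δ)), Real.div_rpow h0.le hd.le,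
      div_eq_mul_inv, mul_inv, inv_inv, ← Real.rpow_neg h0.le]
  have e3 : (1-δ)^((δ:ℝ)-1) = (1-δ)^(δ:ℝ) * (1-δ)⁻¹ := by
    rw [Real.rpow_sub hd, Real.rpow_one]
    ring
  have e4 : (2:ℝ)^(-1:ℝ) = 2⁻¹ := by
    rw [Real.rpow_neg_one]
  rw [e1, e2, e3, e4]
  ring

/-! ### Existence of good rows up to any horizon -/

noncomputable def Gw (R' : ℝ) (J : ℕ) (w : Fin J → (Fin (Mcap R' J) → F2)) :
    ∀ n, Fin (mrow R' n) → F2 :=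
  fun n t => if h : n < J then (if h2 : (t:ℕ) < Mcap R' J then w ⟨n, h⟩ ⟨(t:ℕ), h2⟩ else 0) else 0

lemma enc_Gw (R' : ℝ) (J : ℕ) (w : Fin J → (Fin (Mcap R' J) → F2))
    (z : ℕ → F2) (n : ℕ) (hn : n < J) :
    enc R' (Gw R' J w) z n =
      rowBit R' (Mcap R' J) z n (if h : n < J then w ⟨n, h⟩ else (fun _ => 0)) := by
  unfold enc rowBit Gw
  rw [← Fin.sum_univ_eq_sum_range (fun k =>
    (if h : k < Mcap R' J then (if h' : n < J then w ⟨n, h'⟩ else (fun _ => 0)) ⟨k, h⟩ else 0)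
      * z k) (mrow R' n)]
  refine Finset.sum_congr rfl fun t _ => ?_
  simp only [dif_pos hn]

lemma zset_card_le (M t0 : ℕ) :
    ((((univ : Finset (Fin M → F2)).image (extendF M)).filter
      (fun z => z t0 = 1 ∧ ∀ s, s < t0 → z s = 0)).card : ℝ) ≤ 2^(M - t0) := by
  have h := Finset.card_le_card_of_injOn (fun (z : ℕ → F2) (s : Fin (M - t0)) => z (t0 + (s:ℕ)))
    (fun z _ => Finset.mem_univ _)
    (s := (((univ : Finset (Fin M → F2)).image (extendF M)).filter
      (fun z => z t0 = 1 ∧ ∀ s, s < t0 → z s = 0)))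
    (t := (univ : Finset (Fin (M - t0) → F2)))
    ?_
  · calc ((((univ : Finset (Fin M → F2)).image (extendF M)).filter
        (fun z => z t0 = 1 ∧ ∀ s, s < t0 → z s = 0)).card : ℝ)
        ≤ ((univ : Finset (Fin (M - t0) → F2)).card : ℝ) := by exact_mod_cast h
      _ = 2^(M - t0) := by
          rw [Finset.card_univ, card_f2_fun]; push_cast; ring
  · intro z1 hz1 z2 hz2 heq
    simp only [Finset.coe_filter, Set.mem_setOf_eq, Finset.mem_image] at hz1 hz2
    obtain ⟨⟨x1, _, hx1⟩, hz1a, hz1b⟩ := hz1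
    obtain ⟨⟨x2, _, hx2⟩, hz2a, hz2b⟩ := hz2
    funext s
    rcases lt_or_ge s t0 with hs | hs
    · rw [hz1b s hs, hz2b s hs]
    · rcases lt_or_ge s M with hsM | hsM
      · have hst : s - t0 < M - t0 := by omega
        have := congrFun heq ⟨s - t0, hst⟩
        simpa [Nat.add_sub_cancel' hs] using this
      · rw [← hx1, ← hx2]
        unfold extendF
        rw [dif_neg (by omega), dif_neg (by omega)]

/-- candidate difference vectors -/
noncomputable def Zs (R' : ℝ) (j t0 : ℕ) : Finset (ℕ → F2) :=
  ((univ : Finset (Fin (Mcap R' j) → F2)).image (extendF (Mcap R' j))).filter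
    (fun z => z t0 = 1 ∧ ∀ s, s < t0 → z s = 0)

/-- relevant first-coordinates -/
noncomputable def Tf (R : ℝ) (j : ℕ) : Finset ℕ :=
  (range j).filter (fun t0 : ℕ => ((t0:ℝ)+1 ≤ R*(j:ℝ)))

open scoped Classical in
/-- failure indicator -/
noncomputable def ind (ε R' : ℝ) (G : ∀ n, Fin (mrow R' n) → F2) (j t0 : ℕ) (z : ℕ → F2) : ℝ :=
  if GoodAt ε R' G j t0 z then 0 else 1

lemma ind_nonneg (ε R' : ℝ) (G : ∀ n, Fin (mrow R' n) → F2) (j t0 : ℕ) (z : ℕ → F2) :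
    0 ≤ ind ε R' G j t0 z := by
  unfold ind; split <;> norm_num

lemma ind_le_one (ε R' : ℝ) (G : ∀ n, Fin (mrow R' n) → F2) (j t0 : ℕ) (z : ℕ → F2) :
    ind ε R' G j t0 z ≤ 1 := by
  unfold ind; split <;> norm_num

lemma ind_eq_one (ε R' : ℝ) (G : ∀ n, Fin (mrow R' n) → F2) (j t0 : ℕ) (z : ℕ → F2)
    (h : ¬ GoodAt ε R' G j t0 z) : ind ε R' G j t0 z = 1 := by
  unfold ind; rw [if_neg h]

lemma mem_Tf {R : ℝ} {j t0 : ℕ} : t0 ∈ Tf R j ↔ t0 < j ∧ ((t0:ℝ)+1 ≤ R*(j:ℝ)) := by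
  unfold Tf; rw [Finset.mem_filter, Finset.mem_range]

lemma mem_Zs_of {R' : ℝ} {j t0 : ℕ} {z : ℕ → F2}
    (h1 : z t0 = 1) (h2 : ∀ s, s < t0 → z s = 0) (h3 : ∀ s, Mcap R' j ≤ s → z s = 0) :
    z ∈ Zs R' j t0 := by
  unfold Zs
  refine Finset.mem_filter.mpr ⟨?_, h1, h2⟩
  rw [Finset.mem_image]
  refine ⟨fun t => z (t:ℕ), Finset.mem_univ _, ?_⟩
  funext s
  unfold extendF
  by_cases hs : s < Mcap R' j
  · rw [dif_pos hs]
  · rw [dif_neg hs]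
    exact (h3 s (le_of_not_gt hs)).symm

lemma Zs_card_le (R' : ℝ) (j t0 : ℕ) : ((Zs R' j t0).card : ℝ) ≤ 2^(Mcap R' j - t0) :=
  zset_card_le (Mcap R' j) t0

lemma mem_Zs_one {R' : ℝ} {j t0 : ℕ} {z : ℕ → F2} (h : z ∈ Zs R' j t0) : z t0 = 1 :=
  (Finset.mem_filter.mp h).2.1

set_option maxHeartbeats 1000000 in
lemma exists_good_rows (ε R R' : ℝ) (hε0 : 0 < ε) (hδ2 : 3*ε < 1/2)
    (hR0 : 0 < R) (hRR' : R < R') (hR'1 : R' < 1)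
    (hβpos : 0 < 1 - binEnt (3*ε) - R') :
    ∃ j₀ : ℕ, 1 ≤ j₀ ∧ ∀ J : ℕ, ∃ G : ∀ n, Fin (mrow R' n) → F2,
      GoodUpTo ε R R' j₀ J G := by
  have hR'0 : 0 < R' := hR0.trans hRR'
  set δ := 3*ε with hδdef
  have hδ0 : 0 < δ := by positivity
  set r := δ/(1-δ) with hrdef
  have hr0 : 0 < r := by
    apply div_pos hδ0; linarith
  have hr1 : r ≤ 1 := by
    rw [div_le_one (by linarith)]; linarith
  set β := 1 - binEnt δ - R' with hβdef
  set α := 1 - R/R' with hαdef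
  have hα0 : 0 < α := by
    have : R/R' < 1 := (div_lt_one hR'0).mpr hRR'
    simp only [hαdef]; linarith
  set q := (2:ℝ)^(-(β*α)) with hqdef
  have hq0 : 0 < q := Real.rpow_pos_of_pos (by norm_num) _
  have hq1 : q < 1 := Real.rpow_lt_one_of_one_lt_of_neg one_lt_two (by nlinarith)
  set σ := Real.sqrt q with hσdef
  have hσ0 : 0 < σ := Real.sqrt_pos.mpr hq0
  have hσ1 : σ < 1 := by
    rw [hσdef, show (1:ℝ) = Real.sqrt 1 by rw [Real.sqrt_one]]
    exact Real.sqrt_lt_sqrt hq0.le hq1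
  have hσq : σ * σ = q := Real.mul_self_sqrt hq0.le
  -- choose j₀
  obtain ⟨N₁, hN₁⟩ := nat_le_exp (Real.log_pos (by
    rw [one_lt_inv_iff₀]; exact ⟨hσ0, hσ1⟩) : 0 < Real.log σ⁻¹) (by norm_num : (0:ℝ) ≤ 2)
  obtain ⟨N₂, hN₂⟩ := exists_pow_lt_of_lt_one (x := 1 - σ) (by linarith) hσ1
  refine ⟨max (max N₁ N₂) 1, le_max_right _ 1, fun J => ?_⟩
  set j₀ := max (max N₁ N₂) 1 with hj₀def
  set W := Mcap R' J with hWdef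
  have hW : ∀ n, n < J → mrow R' n ≤ W := fun n hn => mrow_le_Mcap hR'0.le hn
  -- the j-tail sum is < 1
  have htail : ∑ j ∈ Icc j₀ J, 2*(j:ℝ)*q^j < 1 := by
    have hterm : ∀ j ∈ Icc j₀ J, 2*(j:ℝ)*q^j ≤ σ^j := by
      intro j hj
      simp only [Finset.mem_Icc] at hj
      have hjN₁ : N₁ ≤ j := le_trans (le_trans (le_max_left _ _) (le_max_left _ _)) hj.1
      have h2j : (j:ℝ) * 2 ≤ (σ⁻¹)^j := by
        rw [pow_eq_exp_log (by positivity : (0:ℝ) < σ⁻¹), mul_comm ((j:ℝ)) (Real.log σ⁻¹)]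
        exact hN₁ j hjN₁
      have hq : q^j = σ^j * σ^j := by rw [← hσq, mul_pow]
      have hσj : (0:ℝ) < σ^j := by positivity
      have h3 : 2*(j:ℝ)*σ^j ≤ 1 := by
        have h4 := mul_le_mul_of_nonneg_right h2j hσj.le
        rw [inv_pow, inv_mul_cancel₀ hσj.ne'] at h4
        rw [show 2*(j:ℝ)*σ^j = (j:ℝ)*2*σ^j by ring]
        exact h4
      calc 2*(j:ℝ)*q^j = (2*(j:ℝ)*σ^j)*σ^j := by rw [hq]; ring
        _ ≤ 1*σ^j := mul_le_mul_of_nonneg_right h3 hσj.le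
        _ = σ^j := one_mul _
    have hle : ∑ j ∈ Icc j₀ J, 2*(j:ℝ)*q^j ≤ ∑ j ∈ Icc j₀ J, σ^j :=
      Finset.sum_le_sum hterm
    have hgeom := geom_tail hσ0.le hσ1 j₀ J
    have hσj₀ : σ^j₀ ≤ σ^N₂ := pow_le_pow_of_le_one hσ0.le hσ1.le
      (le_trans (le_trans (le_max_right N₁ N₂) (le_max_left _ 1)) (le_refl j₀))
    have hfin : σ^j₀/(1-σ) < 1 := by
      rw [div_lt_one (by linarith)]
      calc σ^j₀ ≤ σ^N₂ := hσj₀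
        _ < 1 - σ := hN₂
    linarith
  -- core per-pair arithmetic bound
  have hcore : ∀ j t0 : ℕ, (t0:ℝ)+1 ≤ R*j →
      (2:ℝ)^(Mcap R' j - t0) *
        (r^(-(3*ε*((j:ℝ) - (nzero R' t0 : ℕ)))) * ((1+r)/2)^(j - nzero R' t0))
      ≤ 2 * q^j := by
    intro j t0 ht0R
    set nz := nzero R' t0 with hnzdef
    have ht0R' : (t0:ℝ) < R' * j := by
      have h1 : R*(j:ℝ) ≤ R'*(j:ℝ) := mul_le_mul_of_nonneg_right hRR'.le (Nat.cast_nonneg j)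
      linarith
    have hnzj : nz < j := nzero_lt hR'0 ht0R'
    have hu : ((j - nz : ℕ):ℝ) = (j:ℝ) - (nz:ℝ) := Nat.cast_sub hnzj.le
    have hαj : α*(j:ℝ) ≤ ((j - nz : ℕ):ℝ) := by
      rw [hu]
      have h9 : (nz:ℝ) ≤ (R*(j:ℝ))/R' := (le_div_iff₀ hR'0).mpr
        (by linarith [nzero_lower hR'0 t0])
      calc α*(j:ℝ) = (j:ℝ) - R*(j:ℝ)/R' := by rw [hαdef]; ring
        _ ≤ (j:ℝ) - (nz:ℝ) := by linarith
    have ht0M : t0 < Mcap R' j := by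
      have h1 : R'*(j:ℝ) ≤ (Mcap R' j : ℝ) := Nat.le_ceil _
      have : (t0:ℝ) < (Mcap R' j : ℝ) := lt_of_lt_of_le ht0R' h1
      exact_mod_cast this
    have hMle : ((Mcap R' j - t0 : ℕ):ℝ) ≤ R'*((j - nz : ℕ):ℝ) + 1 := by
      rw [Nat.cast_sub ht0M.le, hu]
      have h1 : (Mcap R' j : ℝ) ≤ R'*(j:ℝ) + 1 := Mcap_le hR'0.le j
      have h2 : R'*(nz:ℝ) ≤ (t0:ℝ) := nzero_lower hR'0 t0
      nlinarith
    set u := j - nz with hudef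
    have hδ1 : δ < 1 := by linarith
    have hent : r^(-δ:ℝ) * ((1+r)/2) = (2:ℝ)^(binEnt δ - 1) := by
      rw [hrdef]; exact entropy_id hδ0 hδ1
    have e1 : r^(-(3*ε*((j:ℝ) - (nz:ℕ)))) * ((1+r)/2)^u
        = ((2:ℝ)^(binEnt δ - 1))^u := by
      have he : -(3*ε*((j:ℝ) - (nz:ℝ))) = (-δ) * ((u:ℕ):ℝ) := by
        rw [hu, hδdef]; ring
      rw [he, Real.rpow_mul hr0.le, Real.rpow_natCast, ← mul_pow, hent]
    have e2 : (2:ℝ)^(Mcap R' j - t0) = (2:ℝ)^(((Mcap R' j - t0:ℕ):ℝ)) := by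
      rw [Real.rpow_natCast]
    have e3 : ((2:ℝ)^(binEnt δ - 1))^u = (2:ℝ)^((binEnt δ - 1) * ((u:ℕ):ℝ)) := by
      rw [← Real.rpow_natCast ((2:ℝ)^(binEnt δ - 1)) u, ← Real.rpow_mul (by norm_num)]
    rw [e1, e2, e3, ← Real.rpow_add (by norm_num)]
    have e4 : q^j = (2:ℝ)^((-(β*α)) * ((j:ℕ):ℝ)) := by
      rw [hqdef, ← Real.rpow_natCast ((2:ℝ)^(-(β*α))) j, ← Real.rpow_mul (by norm_num)]
    rw [e4]
    have hexp : ((Mcap R' j - t0:ℕ):ℝ) + (binEnt δ - 1) * ((u:ℕ):ℝ)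
        ≤ 1 + (-(β*α)) * ((j:ℕ):ℝ) := by
      have h6 : R'*((u:ℕ):ℝ) + (binEnt δ - 1) * ((u:ℕ):ℝ) = -β * ((u:ℕ):ℝ) := by
        rw [hβdef]; ring
      have h7 : -β * ((u:ℕ):ℝ) ≤ -β * (α * (j:ℝ)) := by
        apply mul_le_mul_of_nonpos_left hαj
        linarith
      have h8 : -β * (α*(j:ℝ)) = (-(β*α)) * ((j:ℕ):ℝ) := by ring
      linarith
    calc (2:ℝ)^(((Mcap R' j - t0:ℕ):ℝ) + (binEnt δ - 1) * ((u:ℕ):ℝ))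
        ≤ (2:ℝ)^(1 + (-(β*α)) * ((j:ℕ):ℝ)) :=
          Real.rpow_le_rpow_of_exponent_le one_le_two hexp
      _ = 2 * (2:ℝ)^((-(β*α)) * ((j:ℕ):ℝ)) := by
          rw [Real.rpow_add (by norm_num), Real.rpow_one]
  -- suffices to find a good w
  suffices hWgood : ∃ w : Fin J → (Fin W → F2), GoodUpTo ε R R' j₀ J (Gw R' J w) by
    obtain ⟨w, hw⟩ := hWgood
    exact ⟨Gw R' J w, hw⟩
  by_contra hno
  push_neg at hno
  -- pointwise union bound: every bad w contributes 1 to the triple sum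
  have hpoint : ∀ w : Fin J → (Fin W → F2),
      (1:ℝ) ≤ ∑ j ∈ Icc j₀ J, ∑ t0 ∈ Tf R j, ∑ z ∈ Zs R' j t0,
        ind ε R' (Gw R' J w) j t0 z := by
    intro w
    have hgood := hno w
    unfold GoodUpTo at hgood
    push_neg at hgood
    obtain ⟨j, hj₀, hjJ, t0, ht0, z, hz0, hz1, hzM, hbad⟩ := hgood
    have hjm : j ∈ Icc j₀ J := mem_Icc.mpr ⟨hj₀, hjJ⟩
    have ht0j : t0 < j := by
      have h1 : R*(j:ℝ) ≤ (j:ℝ) := by nlinarith [Nat.cast_nonneg (α := ℝ) j]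
      have : (t0:ℝ) < (j:ℝ) := by linarith
      exact_mod_cast this
    have ht0m : t0 ∈ Tf R j := mem_Tf.mpr ⟨ht0j, ht0⟩
    have hzm : z ∈ Zs R' j t0 := mem_Zs_of hz1 hz0 hzM
    calc (1:ℝ) = ind ε R' (Gw R' J w) j t0 z := (ind_eq_one _ _ _ _ _ _ hbad).symm
      _ ≤ ∑ z' ∈ Zs R' j t0, ind ε R' (Gw R' J w) j t0 z' :=
          Finset.single_le_sum (f := fun z' => ind ε R' (Gw R' J w) j t0 z')
            (fun z' _ => ind_nonneg _ _ _ _ _ _) hzm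
      _ ≤ ∑ t0' ∈ Tf R j, ∑ z' ∈ Zs R' j t0', ind ε R' (Gw R' J w) j t0' z' :=
          Finset.single_le_sum
            (f := fun t0' => ∑ z' ∈ Zs R' j t0', ind ε R' (Gw R' J w) j t0' z')
            (fun t0' _ => Finset.sum_nonneg
              (fun z' _ => ind_nonneg _ _ _ _ _ _)) ht0m
      _ ≤ _ := Finset.single_le_sum
            (f := fun j' => ∑ t0' ∈ Tf R j', ∑ z' ∈ Zs R' j' t0',
              ind ε R' (Gw R' J w) j' t0' z')
            (fun j' _ => Finset.sum_nonneg fun t0' _ =>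
              Finset.sum_nonneg (fun z' _ => ind_nonneg _ _ _ _ _ _)) hjm
  -- per-(j,t0,z) counting bound via gv_count
  have hcount : ∀ (j t0 : ℕ) (z : ℕ → F2), j ≤ J → z t0 = 1 →
      ∑ w : Fin J → (Fin W → F2), ind ε R' (Gw R' J w) j t0 z
      ≤ r^(-(3*ε*((j:ℝ) - (nzero R' t0 : ℕ)))) *
          (((2:ℝ)^W)^J * ((1+r)/2)^(j - nzero R' t0)) := by
    intro j t0 z hjJ hz1
    have heq : ∀ w : Fin J → (Fin W → F2),
        ind ε R' (Gw R' J w) j t0 z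
        = (if (3*ε*((j:ℝ) - (nzero R' t0:ℕ)) ≤
            ((((range j).filter (fun n => nzero R' t0 ≤ n ∧
              rowBit R' W z n (if h : n < J then w ⟨n, h⟩ else (fun _ => 0)) = 1)).card : ℕ) : ℝ))
            then (0:ℝ) else 1) := by
      intro w
      have hfe : (range j).filter (fun n => nzero R' t0 ≤ n ∧ enc R' (Gw R' J w) z n = 1)
          = (range j).filter (fun n => nzero R' t0 ≤ n ∧
              rowBit R' W z n (if h : n < J then w ⟨n, h⟩ else (fun _ => 0)) = 1) := by
        apply Finset.filter_congr
        intro n hn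
        rw [enc_Gw R' J w z n (lt_of_lt_of_le (mem_range.mp hn) hjJ)]
      unfold ind GoodAt
      rw [hfe]
    rw [Finset.sum_congr rfl (fun w _ => heq w)]
    exact gv_count R' hR'0 hr0 hr1 J W j hjJ hW z t0 hz1 _
  -- the total count is strictly less than the number of w's: contradiction
  have htriple : ∑ w : Fin J → (Fin W → F2),
      (∑ j ∈ Icc j₀ J, ∑ t0 ∈ Tf R j, ∑ z ∈ Zs R' j t0, ind ε R' (Gw R' J w) j t0 z)
      < ((2:ℝ)^W)^J := by
    rw [Finset.sum_comm]
    have hjbound : ∀ j ∈ Icc j₀ J,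
        (∑ w : Fin J → (Fin W → F2), ∑ t0 ∈ Tf R j, ∑ z ∈ Zs R' j t0,
          ind ε R' (Gw R' J w) j t0 z)
        ≤ ((2:ℝ)^W)^J * (2*(j:ℝ)*q^j) := by
      intro j hj
      rw [Finset.mem_Icc] at hj
      rw [Finset.sum_comm]
      have ht0bound : ∀ t0 ∈ Tf R j,
          (∑ w : Fin J → (Fin W → F2), ∑ z ∈ Zs R' j t0, ind ε R' (Gw R' J w) j t0 z)
          ≤ ((2:ℝ)^W)^J * (2*q^j) := by
        intro t0 ht0
        obtain ⟨ht0j, ht0R⟩ := mem_Tf.mp ht0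
        rw [Finset.sum_comm]
        have hzb : ∀ z ∈ Zs R' j t0,
            ∑ w : Fin J → (Fin W → F2), ind ε R' (Gw R' J w) j t0 z
            ≤ r^(-(3*ε*((j:ℝ) - (nzero R' t0 : ℕ)))) *
                (((2:ℝ)^W)^J * ((1+r)/2)^(j - nzero R' t0)) :=
          fun z hz => hcount j t0 z hj.2 (mem_Zs_one hz)
        have hBnn : (0:ℝ) ≤ r^(-(3*ε*((j:ℝ) - (nzero R' t0 : ℕ)))) *
            (((2:ℝ)^W)^J * ((1+r)/2)^(j - nzero R' t0)) := by
          have h1 : (0:ℝ) ≤ r^(-(3*ε*((j:ℝ) - (nzero R' t0 : ℕ)))) :=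
            Real.rpow_nonneg hr0.le _
          have h3 : (0:ℝ) ≤ ((1+r)/2)^(j - nzero R' t0) := by positivity
          positivity
        calc (∑ z ∈ Zs R' j t0, ∑ w : Fin J → (Fin W → F2), ind ε R' (Gw R' J w) j t0 z)
            ≤ ((Zs R' j t0).card : ℝ) *
              (r^(-(3*ε*((j:ℝ) - (nzero R' t0 : ℕ)))) *
                (((2:ℝ)^W)^J * ((1+r)/2)^(j - nzero R' t0))) := by
              rw [← nsmul_eq_mul]
              exact Finset.sum_le_card_nsmul _ _ _ hzb
          _ ≤ (2:ℝ)^(Mcap R' j - t0) *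
              (r^(-(3*ε*((j:ℝ) - (nzero R' t0 : ℕ)))) *
                (((2:ℝ)^W)^J * ((1+r)/2)^(j - nzero R' t0))) :=
              mul_le_mul_of_nonneg_right (Zs_card_le R' j t0) hBnn
          _ = ((2:ℝ)^W)^J * ((2:ℝ)^(Mcap R' j - t0) *
              (r^(-(3*ε*((j:ℝ) - (nzero R' t0 : ℕ)))) *
                ((1+r)/2)^(j - nzero R' t0))) := by ring
          _ ≤ ((2:ℝ)^W)^J * (2*q^j) :=
              mul_le_mul_of_nonneg_left (hcore j t0 ht0R) (by positivity)
      calc (∑ t0 ∈ Tf R j, ∑ w : Fin J → (Fin W → F2), ∑ z ∈ Zs R' j t0,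
            ind ε R' (Gw R' J w) j t0 z)
          ≤ ((Tf R j).card : ℝ) * (((2:ℝ)^W)^J * (2*q^j)) := by
            rw [← nsmul_eq_mul]
            exact Finset.sum_le_card_nsmul _ _ _ ht0bound
        _ ≤ (j:ℝ) * (((2:ℝ)^W)^J * (2*q^j)) := by
            apply mul_le_mul_of_nonneg_right ?_ (by positivity)
            · have h1 : (Tf R j).card ≤ j := by
                unfold Tf
                calc ((range j).filter (fun t0 : ℕ => ((t0:ℝ)+1 ≤ R*(j:ℝ)))).card
                    ≤ (range j).card := Finset.card_filter_le _ _
                  _ = j := Finset.card_range j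
              exact_mod_cast h1
        _ = ((2:ℝ)^W)^J * (2*(j:ℝ)*q^j) := by ring
    calc ∑ j ∈ Icc j₀ J, ∑ w : Fin J → (Fin W → F2), ∑ t0 ∈ Tf R j, ∑ z ∈ Zs R' j t0,
          ind ε R' (Gw R' J w) j t0 z
        ≤ ∑ j ∈ Icc j₀ J, ((2:ℝ)^W)^J * (2*(j:ℝ)*q^j) := Finset.sum_le_sum hjbound
      _ = ((2:ℝ)^W)^J * ∑ j ∈ Icc j₀ J, 2*(j:ℝ)*q^j := by rw [← Finset.mul_sum]
      _ < ((2:ℝ)^W)^J * 1 := by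
          apply mul_lt_mul_of_pos_left htail (by positivity)
      _ = ((2:ℝ)^W)^J := mul_one _
  have hfull : ((2:ℝ)^W)^J ≤ ∑ w : Fin J → (Fin W → F2),
      (∑ j ∈ Icc j₀ J, ∑ t0 ∈ Tf R j, ∑ z ∈ Zs R' j t0, ind ε R' (Gw R' J w) j t0 z) := by
    calc ((2:ℝ)^W)^J = ∑ _w : Fin J → (Fin W → F2), (1:ℝ) := by
          rw [Finset.sum_const, card_univ, nsmul_eq_mul, mul_one, Fintype.card_fun,
            card_f2_fun, Fintype.card_fin]
          push_cast
          rfl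
      _ ≤ _ := Finset.sum_le_sum (fun w _ => hpoint w)
  linarith [htriple, hfull]

/-! ### From finite horizons to an infinite generator matrix -/

lemma goodUpTo_mono {ε R R' : ℝ} {j₀ J J' : ℕ} {G : ∀ n, Fin (mrow R' n) → F2}
    (h : J ≤ J') (hG : GoodUpTo ε R R' j₀ J' G) : GoodUpTo ε R R' j₀ J G :=
  fun j hj₀ hjJ => hG j hj₀ (hjJ.trans h)

lemma enc_row_congr {R' : ℝ} {G G' : ∀ n, Fin (mrow R' n) → F2} {z : ℕ → F2} {n : ℕ}
    (h : G n = G' n) : enc R' G z n = enc R' G' z n := by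
  unfold enc; rw [h]

lemma goodUpTo_congr {ε R R' : ℝ} {j₀ J : ℕ} {G G' : ∀ n, Fin (mrow R' n) → F2}
    (h : ∀ k, k < J → G k = G' k) (hG : GoodUpTo ε R R' j₀ J G) :
    GoodUpTo ε R R' j₀ J G' := by
  intro j hj₀ hjJ t0 ht0 z hz0 hz1 hzM
  have hGA := hG j hj₀ hjJ t0 ht0 z hz0 hz1 hzM
  unfold GoodAt at hGA ⊢
  have hfe : (range j).filter (fun n => nzero R' t0 ≤ n ∧ enc R' G z n = 1)
      = (range j).filter (fun n => nzero R' t0 ≤ n ∧ enc R' G' z n = 1) := by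
    apply Finset.filter_congr
    intro n hn
    rw [enc_row_congr (h n (lt_of_lt_of_le (mem_range.mp hn) hjJ))]
  rwa [hfe] at hGA

/-- extendability predicate for the dependent-choice construction. -/
def ExtP (ε R R' : ℝ) (j₀ n : ℕ) (Γ : ∀ k, Fin (mrow R' k) → F2) : Prop :=
  ∀ J, ∃ Γ' : ∀ k, Fin (mrow R' k) → F2,
    (∀ k, k < n → Γ' k = Γ k) ∧ GoodUpTo ε R R' j₀ J Γ'

lemma extP_zero {ε R R' : ℝ} {j₀ : ℕ}
    (hex : ∀ J : ℕ, ∃ G : ∀ n, Fin (mrow R' n) → F2, GoodUpTo ε R R' j₀ J G)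
    (Γ : ∀ k, Fin (mrow R' k) → F2) : ExtP ε R R' j₀ 0 Γ := by
  intro J
  obtain ⟨G, hG⟩ := hex J
  exact ⟨G, fun k hk => absurd hk (Nat.not_lt_zero k), hG⟩

lemma extP_step {ε R R' : ℝ} {j₀ n : ℕ} {Γ : ∀ k, Fin (mrow R' k) → F2}
    (h : ExtP ε R R' j₀ n Γ) :
    ∃ ρ : Fin (mrow R' n) → F2, ExtP ε R R' j₀ (n+1) (Function.update Γ n ρ) := by
  by_contra hc
  push_neg at hc
  unfold ExtP at hc
  push_neg at hc
  choose Jf Hf using hc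
  set Jm := Finset.univ.sup Jf with hJm
  obtain ⟨Γ', hagree, hgood⟩ := h Jm
  set ρ := Γ' n with hρ
  have hJle : Jf ρ ≤ Jm := Finset.le_sup (Finset.mem_univ ρ)
  have := Hf ρ Γ' ?_
  · exact this (goodUpTo_mono hJle hgood)
  · intro k hk
    rcases Nat.lt_succ_iff_lt_or_eq.mp hk with hk' | hk'
    · rw [hagree k hk', Function.update_of_ne (Nat.ne_of_lt hk') _ _]
    · subst hk'
      rw [Function.update_self]

lemma exists_good_inf (ε R R' : ℝ) (hε0 : 0 < ε) (hδ2 : 3*ε < 1/2)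
    (hR0 : 0 < R) (hRR' : R < R') (hR'1 : R' < 1)
    (hβpos : 0 < 1 - binEnt (3*ε) - R') :
    ∃ j₀ : ℕ, 1 ≤ j₀ ∧ ∃ G : ∀ n, Fin (mrow R' n) → F2,
      ∀ J, GoodUpTo ε R R' j₀ J G := by
  obtain ⟨j₀, hj₀, hex⟩ := exists_good_rows ε R R' hε0 hδ2 hR0 hRR' hR'1 hβpos
  refine ⟨j₀, hj₀, ?_⟩
  -- recursive sequence of partial assignments
  let F : ∀ _ : ℕ, {Γ : ∀ k, Fin (mrow R' k) → F2 // ExtP ε R R' j₀ _ Γ} :=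
    fun n => Nat.rec (motive := fun n => {Γ : ∀ k, Fin (mrow R' k) → F2 // ExtP ε R R' j₀ n Γ})
      ⟨(fun _ _ => 0), extP_zero hex _⟩
      (fun m p => ⟨Function.update p.1 m (Classical.choose (extP_step p.2)),
        Classical.choose_spec (extP_step p.2)⟩) n
  have hFsucc : ∀ m : ℕ, (F (m+1)).1 =
      Function.update (F m).1 m (Classical.choose (extP_step (F m).2)) := fun m => rfl
  have hstab : ∀ m k : ℕ, k < m → (F m).1 k = (F (k+1)).1 k := by
    intro m
    induction m with
    | zero => intro k hk; exact absurd hk (Nat.not_lt_zero k)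
    | succ m ih =>
        intro k hk
        rcases Nat.lt_succ_iff_lt_or_eq.mp hk with hk' | hk'
        · rw [hFsucc m, Function.update_of_ne (Nat.ne_of_lt hk') _ _, ih k hk']
        · subst hk'
          rfl
  refine ⟨fun k => (F (k+1)).1 k, fun J => ?_⟩
  obtain ⟨Γ', hagree, hgood⟩ := (F J).2 J
  apply goodUpTo_congr (G := Γ') ?_ hgood
  intro k hk
  rw [hagree k hk, hstab J k hk]

/-! ### Decoding analysis -/

lemma decode_fail (ε R R' : ℝ) (hR0 : 0 < R) (hRR' : R < R') (j₀ : ℕ)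
    (G : ∀ n, Fin (mrow R' n) → F2) (hG : ∀ J, GoodUpTo ε R R' j₀ J G)
    (x : ℕ → F2) (i j : ℕ) (hij : (i:ℝ) ≤ R * j) (hjj₀ : j₀ ≤ j)
    (η : Fin j → F2)
    (hfail : ∃ t, t < i ∧ dec R' G j (fun s => enc R' G x (s:ℕ) + η s) t ≠ x t) :
    ∃ t0, t0 < i ∧
      (3*ε*((j:ℝ) - (nzero R' t0 : ℕ)))/2 ≤
        ((univ.filter (fun s : Fin j => nzero R' t0 ≤ (s:ℕ) ∧ η s = 1)).card : ℝ) := by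
  have hR'0 : 0 < R' := hR0.trans hRR'
  obtain ⟨t, hti, htne⟩ := hfail
  set M := Mcap R' j with hM
  set y : Fin j → F2 := fun s => enc R' G x (s:ℕ) + η s with hy
  set Dy : ℕ → F2 := dec R' G j y with hDy
  obtain ⟨⟨xhat, hDx⟩, hmin⟩ := dec_spec R' G j y
  -- i fits inside the candidate scope
  have hiM : i ≤ M := by
    have h1 : (i:ℝ) ≤ R'*(j:ℝ) := by
      have : R*(j:ℝ) ≤ R'*(j:ℝ) := mul_le_mul_of_nonneg_right hRR'.le (Nat.cast_nonneg j)
      linarith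
    have h2 : R'*(j:ℝ) ≤ (M:ℝ) := Nat.le_ceil _
    exact_mod_cast h1.trans h2
  set xt : Fin M → F2 := fun s => x (s:ℕ) with hxt
  set z : ℕ → F2 := fun s => Dy s + extendF M xt s with hz
  -- z is nonzero at t
  have hzt : z t ≠ 0 := by
    have h1 : extendF M xt t = x t := by
      unfold extendF
      rw [dif_pos (lt_of_lt_of_le hti hiM)]
    simp only [hz, h1]
    have : ∀ a b : F2, a ≠ b → a + b ≠ 0 := by decide
    exact this _ _ htne
  have hzex : ∃ s, z s ≠ 0 := ⟨t, hzt⟩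
  set t0 := Nat.find hzex with ht0def
  have ht0t : t0 ≤ t := Nat.find_min' hzex hzt
  have ht0i : t0 < i := lt_of_le_of_lt ht0t hti
  have hz1 : z t0 = 1 := f2_ne_zero _ (Nat.find_spec hzex)
  have hz0 : ∀ s, s < t0 → z s = 0 := by
    intro s hs
    have := Nat.find_min hzex hs
    simpa using this
  have hzM : ∀ s, M ≤ s → z s = 0 := by
    intro s hs
    have h1 : extendF M xt s = 0 := by
      unfold extendF; rw [dif_neg (not_lt.mpr hs)]
    have h2 : Dy s = 0 := by
      rw [hDy, hDx]
      unfold extendF; rw [dif_neg (not_lt.mpr hs)]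
    simp [hz, h1, h2]
  -- good property at (j, t0, z)
  have ht0R : (t0:ℝ) + 1 ≤ R*(j:ℝ) := by
    have h1 : (t0:ℝ) + 1 ≤ (i:ℝ) := by exact_mod_cast ht0i
    linarith
  have hGA := hG j j hjj₀ le_rfl t0 ht0R z hz0 hz1 hzM
  unfold GoodAt at hGA
  set nz := nzero R' t0 with hnz
  -- linear expansions of the encoder
  have h_encxt : ∀ n : Fin j, enc R' G (extendF M xt) (n:ℕ) = enc R' G x (n:ℕ) := by
    intro n
    apply enc_congr
    intro s hs
    have hsM : s < M := lt_of_lt_of_le hs (mrow_le_Mcap hR'0.le n.2)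
    unfold extendF
    rw [dif_pos hsM]
  have h_encD : ∀ n : Fin j, enc R' G Dy (n:ℕ) = enc R' G x (n:ℕ) + enc R' G z (n:ℕ) := by
    intro n
    have h1 : Dy = z + extendF M xt := by
      funext s
      simp only [hz, Pi.add_apply]
      have : ∀ a b : F2, a = a + b + b := by decide
      exact this _ _
    rw [h1, enc_add]
    have h2 : ∀ a b c : F2, b + c = a → a + b = c := by decide
    -- enc z n + enc (ext xt) n   vs  enc x n + enc z n
    rw [h_encxt n]
    exact add_comm _ _
  -- the two filter sets in the minimality statement
  have hAeq : (univ.filter fun n : Fin j => enc R' G Dy (n:ℕ) ≠ y n)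
      = (univ.filter fun n : Fin j => enc R' G z (n:ℕ) + η n ≠ 0) := by
    apply Finset.filter_congr
    intro n _
    rw [h_encD n]
    have : ∀ a b c : F2, ((a + b ≠ a + c) ↔ (b + c ≠ 0)) := by decide
    exact this _ _ _
  have hBeq : (univ.filter fun n : Fin j => enc R' G (extendF M xt) (n:ℕ) ≠ y n)
      = (univ.filter fun n : Fin j => η n ≠ 0) := by
    apply Finset.filter_congr
    intro n _
    rw [h_encxt n]
    have : ∀ a b : F2, ((a ≠ a + b) ↔ (b ≠ 0)) := by decide
    exact this _ _
  have hmin' : (univ.filter fun n : Fin j => enc R' G z (n:ℕ) + η n ≠ 0).card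
      ≤ (univ.filter fun n : Fin j => η n ≠ 0).card := by
    rw [← hAeq, ← hBeq]
    have h := hmin xt
    rw [← hDy] at h
    exact h
  -- split over S := {n | nz ≤ n ∧ enc z n = 1}
  set Q : Fin j → Prop := fun n => nz ≤ (n:ℕ) ∧ enc R' G z (n:ℕ) = 1 with hQ
  have hSz : ∀ n : Fin j, ¬ Q n → enc R' G z (n:ℕ) = 0 := by
    intro n hn
    by_cases h1 : nz ≤ (n:ℕ)
    · rcases f2_cases (enc R' G z (n:ℕ)) with h | h
      · exact h
      · exact absurd ⟨h1, h⟩ hn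
    · push_neg at h1
      apply enc_zero
      intro s hs
      apply hz0
      have h2 : mrow R' (n:ℕ) ≤ t0 := by
        by_contra hc
        push_neg at hc
        exact absurd (Nat.sInf_le (Set.mem_setOf_eq ▸ hc)) (not_le.mpr h1)
      omega
  -- counting
  have hcard1 : ∀ p : Fin j → Prop, ∀ _ : DecidablePred p,
      (univ.filter p).card = ∑ n : Fin j, (if p n then 1 else 0) := by
    intro p hp
    rw [Finset.card_filter]
  have hsplitA : (univ.filter fun n : Fin j => enc R' G z (n:ℕ) + η n ≠ 0).card
      = (∑ n ∈ univ.filter Q, (if η n = 0 then 1 else 0))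
        + (∑ n ∈ univ.filter (fun n => ¬ Q n), (if η n ≠ 0 then 1 else 0)) := by
    rw [Finset.card_filter, ← Finset.sum_filter_add_sum_filter_not univ Q]
    congr 1
    · refine Finset.sum_congr rfl fun n hn => ?_
      have hq : enc R' G z (n:ℕ) = 1 := ((Finset.mem_filter.mp hn).2).2
      rw [hq]
      have : ∀ b : F2, ((1 + b ≠ 0) ↔ (b = 0)) := by decide
      exact if_congr (this (η n)) rfl rfl
    · refine Finset.sum_congr rfl fun n hn => ?_
      have hq : enc R' G z (n:ℕ) = 0 := hSz n (Finset.mem_filter.mp hn).2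
      rw [hq]
      have : ∀ b : F2, ((0 + b ≠ 0) ↔ (b ≠ 0)) := by decide
      exact if_congr (this (η n)) rfl rfl
  have hsplitB : (univ.filter fun n : Fin j => η n ≠ 0).card
      = (∑ n ∈ univ.filter Q, (if η n ≠ 0 then 1 else 0))
        + (∑ n ∈ univ.filter (fun n => ¬ Q n), (if η n ≠ 0 then 1 else 0)) := by
    rw [Finset.card_filter, ← Finset.sum_filter_add_sum_filter_not univ Q]
  have hS2 : (∑ n ∈ univ.filter Q, (if η n = 0 then 1 else 0))
      ≤ ∑ n ∈ univ.filter Q, (if η n ≠ 0 then 1 else 0) := by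
    rw [hsplitA, hsplitB] at hmin'
    omega
  have hScard : (univ.filter Q).card ≤ 2 * ∑ n ∈ univ.filter Q, (if η n ≠ 0 then 1 else 0) := by
    have h1 : (univ.filter Q).card
        = ∑ n ∈ univ.filter Q, ((if η n = 0 then 1 else 0) + (if η n ≠ 0 then 1 else 0)) := by
      rw [Finset.card_eq_sum_ones]
      refine Finset.sum_congr rfl fun n _ => ?_
      by_cases hb : η n = 0
      · rw [if_pos hb, if_neg (not_not.mpr hb)]
      · rw [if_neg hb, if_pos hb]
    rw [h1, Finset.sum_add_distrib]
    omega
  have hsubT : ∑ n ∈ univ.filter Q, (if η n ≠ 0 then 1 else 0)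
      ≤ (univ.filter (fun s : Fin j => nz ≤ (s:ℕ) ∧ η s = 1)).card := by
    rw [← Finset.card_filter]
    apply Finset.card_le_card
    intro n hn
    simp only [Finset.mem_filter] at hn ⊢
    obtain ⟨⟨_, hq⟩, hη⟩ := hn
    exact ⟨Finset.mem_univ n, hq.1, f2_ne_zero _ hη⟩
  -- assemble with the Good bound
  refine ⟨t0, ht0i, ?_⟩
  have hbridge : ((range j).filter (fun n => nz ≤ n ∧ enc R' G z n = 1)).card
      = (univ.filter Q).card := (card_filter_fin j _).symm
  rw [hbridge] at hGA
  have hfinal : ((univ.filter Q).card : ℝ)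
      ≤ 2 * ((univ.filter (fun s : Fin j => nz ≤ (s:ℕ) ∧ η s = 1)).card : ℝ) := by
    have := hScard.trans (Nat.mul_le_mul_left 2 hsubT)
    exact_mod_cast this
  linarith

end UCode

open UCode Finset in
set_option maxHeartbeats 1000000 in
/-- For every `ε < 1/17` and `R < 1 − H(3ε)` there exists a linear unbounded code over
`𝔽₂` with rate `R` resilient to `BSC(ε)` noise: there are `k₀`, `c > 0` and a decoder
`D` such that for all messages `x`, all `i ≥ k₀` and `j ≥ i/R`, the probability (over
i.i.d. `Bernoulli(ε)` flips of the first `j` codeword bits) that `D` fails to recover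
`x[:i]` is at most `exp(−c j)`.  The probability is written as a sum over all noise
patterns `η ∈ 𝔽₂^j`, weighted by `∏ (if η t = 1 then ε else 1 − ε)`. -/
theorem exists_linear_unbounded_code_bsc
    (ε R : ℝ) (hε0 : 0 < ε) (hε : ε < 1 / 17) (hR0 : 0 < R)
    (hR : R < 1 - binEnt (3 * ε)) :
    ∃ C : (ℕ → ZMod 2) → (ℕ → ZMod 2),
      (∀ x y, C (x + y) = C x + C y) ∧
      ∃ (k₀ : ℕ) (c : ℝ), 0 < c ∧
        ∃ D : (m : ℕ) → (Fin m → ZMod 2) → (ℕ → ZMod 2),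
          ∀ (x : ℕ → ZMod 2) (i j : ℕ), k₀ ≤ i → (i : ℝ) ≤ R * j →
            (∑ η : Fin j → ZMod 2,
              (∏ t : Fin j, if η t = 1 then ε else 1 - ε) *
                Set.indicator
                  {η' : Fin j → ZMod 2 |
                    ∃ t < i, D j (fun s => C x (s : ℕ) + η' s) t ≠ x t}
                  (fun _ => (1 : ℝ)) η) ≤ Real.exp (-c * j) := by
  classical
  have hε1 : ε < 1 := by linarith
  have hδ2 : 3*ε < 1/2 := by linarith
  have hent_pos : 0 < binEnt (3*ε) := binEnt_pos (by linarith) (by linarith)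
  set R' := (R + (1 - binEnt (3*ε)))/2 with hR'def
  have hRR' : R < R' := by rw [hR'def]; linarith
  have hR'1 : R' < 1 := by rw [hR'def]; linarith
  have hβpos : 0 < 1 - binEnt (3*ε) - R' := by rw [hR'def]; linarith
  have hR'0 : 0 < R' := hR0.trans hRR'
  have hRlt1 : R < 1 := by linarith
  obtain ⟨j₀, hj₀1, G, hGood⟩ := exists_good_inf ε R R' hε0 hδ2 hR0 hRR' hR'1 hβpos
  -- constants
  set c₃ := (3/2)*ε*Real.log 2 - Real.log (1+ε) with hc₃def
  have hc₃ : 0 < c₃ := by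
    have h1 : Real.log (1+ε) ≤ ε := by
      have := Real.log_le_sub_one_of_pos (by linarith : (0:ℝ) < 1+ε)
      linarith
    have h2 : (0.6931471803:ℝ) < Real.log 2 := Real.log_two_gt_d9
    rw [hc₃def]
    nlinarith
  set α := 1 - R/R' with hαdef
  have hα0 : 0 < α := by
    have : R/R' < 1 := (div_lt_one hR'0).mpr hRR'
    rw [hαdef]; linarith
  set c := c₃*α/2 with hcdef
  have hc0 : 0 < c := by rw [hcdef]; positivity
  obtain ⟨N₃, hN₃⟩ := nat_le_exp hc0 (by norm_num : (0:ℝ) ≤ 1)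
  refine ⟨enc R' G, ?_, max (max j₀ N₃) 1, c, hc0, dec R' G, ?_⟩
  · intro x y
    funext n
    exact enc_add R' G x y n
  intro x i j hk₀i hij
  set k₀ := max (max j₀ N₃) 1 with hk₀def
  have hi1 : 1 ≤ i := le_trans (le_max_right _ 1) hk₀i
  have hijn : i ≤ j := by
    have h1 : (i:ℝ) ≤ (j:ℝ) := by nlinarith [Nat.cast_nonneg (α := ℝ) j]
    exact_mod_cast h1
  have hjj₀ : j₀ ≤ j := le_trans (le_trans (le_max_left _ _) (le_max_left _ 1))
    (hk₀i.trans hijn)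
  have hjN₃ : N₃ ≤ j := le_trans (le_trans (le_max_right _ _) (le_max_left _ 1))
    (hk₀i.trans hijn)
  -- weights are nonnegative
  have hwnn : ∀ η : Fin j → F2, (0:ℝ) ≤ ∏ t : Fin j, (if η t = 1 then ε else 1 - ε) :=
    fun η => Finset.prod_nonneg fun t _ => by split <;> linarith
  -- per-t0 threshold
  have hnzj : ∀ t0 : ℕ, t0 < i → nzero R' t0 < j := by
    intro t0 ht0
    apply nzero_lt hR'0
    have h1 : (t0:ℝ) + 1 ≤ (i:ℝ) := by exact_mod_cast ht0
    have h2 : R*(j:ℝ) ≤ R'*(j:ℝ) := mul_le_mul_of_nonneg_right hRR'.le (Nat.cast_nonneg j)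
    linarith
  have hthr_nn : ∀ t0 : ℕ, t0 < i → 0 ≤ (3*ε*((j:ℝ) - (nzero R' t0 : ℕ)))/2 := by
    intro t0 ht0
    have := hnzj t0 ht0
    have h1 : ((nzero R' t0 : ℕ):ℝ) ≤ (j:ℝ) := by exact_mod_cast this.le
    have h3 : (0:ℝ) ≤ 3*ε := by linarith
    nlinarith
  -- pointwise bound by the union of suffix-weight events
  have hpt : ∀ η : Fin j → F2,
      (∏ t : Fin j, (if η t = 1 then ε else 1 - ε)) *
        Set.indicator {η' : Fin j → F2 |
          ∃ t < i, dec R' G j (fun s => enc R' G x (s:ℕ) + η' s) t ≠ x t}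
          (fun _ => (1:ℝ)) η
      ≤ ∑ t0 ∈ range i, (∏ t : Fin j, (if η t = 1 then ε else 1 - ε)) *
          (if (3*ε*((j:ℝ) - (nzero R' t0 : ℕ)))/2 ≤
            ((univ.filter (fun s : Fin j => nzero R' t0 ≤ (s:ℕ) ∧ η s = 1)).card : ℝ)
          then (1:ℝ) else 0) := by
    intro η
    have hnn : ∀ t0 ∈ range i, (0:ℝ) ≤ (∏ t : Fin j, (if η t = 1 then ε else 1 - ε)) *
        (if (3*ε*((j:ℝ) - (nzero R' t0 : ℕ)))/2 ≤
          ((univ.filter (fun s : Fin j => nzero R' t0 ≤ (s:ℕ) ∧ η s = 1)).card : ℝ)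
        then (1:ℝ) else 0) := by
      intro t0 _
      apply mul_nonneg (hwnn η)
      split <;> norm_num
    by_cases hmem : η ∈ {η' : Fin j → F2 |
        ∃ t < i, dec R' G j (fun s => enc R' G x (s:ℕ) + η' s) t ≠ x t}
    · rw [Set.indicator_of_mem hmem]
      obtain ⟨t0, ht0i, hineq⟩ := decode_fail ε R R' hR0 hRR' j₀ G hGood x i j hij hjj₀ η
        (by simpa using hmem)
      calc (∏ t : Fin j, (if η t = 1 then ε else 1 - ε)) * 1
          = (∏ t : Fin j, (if η t = 1 then ε else 1 - ε)) *
            (if (3*ε*((j:ℝ) - (nzero R' t0 : ℕ)))/2 ≤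
              ((univ.filter (fun s : Fin j => nzero R' t0 ≤ (s:ℕ) ∧ η s = 1)).card : ℝ)
            then (1:ℝ) else 0) := by rw [if_pos hineq]
        _ ≤ _ := Finset.single_le_sum (f := fun t0 =>
            (∏ t : Fin j, (if η t = 1 then ε else 1 - ε)) *
            (if (3*ε*((j:ℝ) - (nzero R' t0 : ℕ)))/2 ≤
              ((univ.filter (fun s : Fin j => nzero R' t0 ≤ (s:ℕ) ∧ η s = 1)).card : ℝ)
            then (1:ℝ) else 0)) hnn (Finset.mem_range.mpr ht0i)
    · rw [Set.indicator_of_notMem hmem, mul_zero]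
      exact Finset.sum_nonneg hnn
  -- sum over η, then over t0
  calc ∑ η : Fin j → F2, (∏ t : Fin j, (if η t = 1 then ε else 1 - ε)) *
        Set.indicator {η' : Fin j → F2 |
          ∃ t < i, dec R' G j (fun s => enc R' G x (s:ℕ) + η' s) t ≠ x t}
          (fun _ => (1:ℝ)) η
      ≤ ∑ η : Fin j → F2, ∑ t0 ∈ range i,
          (∏ t : Fin j, (if η t = 1 then ε else 1 - ε)) *
          (if (3*ε*((j:ℝ) - (nzero R' t0 : ℕ)))/2 ≤
            ((univ.filter (fun s : Fin j => nzero R' t0 ≤ (s:ℕ) ∧ η s = 1)).card : ℝ)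
          then (1:ℝ) else 0) := Finset.sum_le_sum (fun η _ => hpt η)
    _ = ∑ t0 ∈ range i, ∑ η : Fin j → F2,
          (∏ t : Fin j, (if η t = 1 then ε else 1 - ε)) *
          (if (3*ε*((j:ℝ) - (nzero R' t0 : ℕ)))/2 ≤
            ((univ.filter (fun s : Fin j => nzero R' t0 ≤ (s:ℕ) ∧ η s = 1)).card : ℝ)
          then (1:ℝ) else 0) := Finset.sum_comm
    _ ≤ ∑ t0 ∈ range i, Real.exp (-c₃ * (α * (j:ℝ))) := by
        apply Finset.sum_le_sum
        intro t0 ht0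
        rw [Finset.mem_range] at ht0
        have hnz := hnzj t0 ht0
        calc ∑ η : Fin j → F2,
              (∏ t : Fin j, (if η t = 1 then ε else 1 - ε)) *
              (if (3*ε*((j:ℝ) - (nzero R' t0 : ℕ)))/2 ≤
                ((univ.filter (fun s : Fin j => nzero R' t0 ≤ (s:ℕ) ∧ η s = 1)).card : ℝ)
              then (1:ℝ) else 0)
            ≤ (2:ℝ)^(-((3*ε*((j:ℝ) - (nzero R' t0 : ℕ)))/2)) * (1+ε)^(j - nzero R' t0) :=
              chernoff ε hε0 hε1 j (nzero R' t0) _ (hthr_nn t0 ht0)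
          _ = Real.exp (-c₃ * ((j - nzero R' t0 : ℕ):ℝ)) := by
              rw [Real.rpow_def_of_pos (by norm_num : (0:ℝ) < 2),
                pow_eq_exp_log (by linarith : (0:ℝ) < 1+ε), ← Real.exp_add]
              congr 1
              rw [Nat.cast_sub hnz.le, hc₃def]
              ring
          _ ≤ Real.exp (-c₃ * (α * (j:ℝ))) := by
              rw [Real.exp_le_exp]
              have hu : α * (j:ℝ) ≤ ((j - nzero R' t0 : ℕ):ℝ) := by
                rw [Nat.cast_sub hnz.le]
                have h9 : ((nzero R' t0 : ℕ):ℝ) ≤ (R*(j:ℝ))/R' := (le_div_iff₀ hR'0).mpr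
                  (by
                    have h2 := nzero_lower hR'0 t0
                    have h3 : (t0:ℝ) + 1 ≤ (i:ℝ) := by exact_mod_cast ht0
                    linarith)
                calc α*(j:ℝ) = (j:ℝ) - R*(j:ℝ)/R' := by rw [hαdef]; ring
                  _ ≤ (j:ℝ) - ((nzero R' t0:ℕ):ℝ) := by linarith
              nlinarith
    _ = (i:ℝ) * Real.exp (-c₃ * (α * (j:ℝ))) := by
        rw [Finset.sum_const, card_range, nsmul_eq_mul]
    _ ≤ Real.exp (-c * j) := by
        have h1 : (i:ℝ) ≤ (j:ℝ) := by exact_mod_cast hijn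
        have h2 : (j:ℝ) * 1 ≤ Real.exp (c * j) := hN₃ j hjN₃
        have h3 : (0:ℝ) < Real.exp (-c₃ * (α * (j:ℝ))) := Real.exp_pos _
        calc (i:ℝ) * Real.exp (-c₃ * (α * (j:ℝ)))
            ≤ (j:ℝ) * Real.exp (-c₃ * (α * (j:ℝ))) :=
              mul_le_mul_of_nonneg_right h1 h3.le
          _ ≤ Real.exp (c * j) * Real.exp (-c₃ * (α * (j:ℝ))) := by
              apply mul_le_mul_of_nonneg_right ?_ h3.le
              · linarith
          _ = Real.exp (c * j + (-c₃ * (α * (j:ℝ)))) := (Real.exp_add _ _).symm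
          _ = Real.exp (-c * j) := by
              congr 1
              rw [hcdef]
              ring
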